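/- Let C be a category with all morphisms monic and let Ω be a universal homogeneous (equivalently universal f-injective) ind-object of C. Then every ind-object Ξ of C embeds into Ω, i.e., there is a morphism of ind-objects Ξ → Ω all of whose components are monic. -/
import Mathlib


open CategoryTheory

universe u v

/-- An ind-object of a category `C`: a sequential diagram `X₁ → X₂ → ⋯` in `C`. -/
structure IndObject (C : Type u) [Category.{v} C] where
  obj : ℕ → C
  map : ∀ n : ℕ, obj n ⟶ obj (n + 1)

namespace IndObject

variable {C : Type u} [Category.{v} C]

/-- The transition morphism `obj n ⟶ obj m` of an ind-object, for `n ≤ m`. -/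
def trans (Ω : IndObject C) : ∀ {n m : ℕ}, n ≤ m → (Ω.obj n ⟶ Ω.obj m) :=
  fun {n m} h =>
    Nat.leRecOn (C := fun m => Ω.obj n ⟶ Ω.obj m) h (fun {l} g => g ≫ Ω.map l) (𝟙 _)

/-- An ind-object is universal if every object of `C` embeds into it. -/
def Universal (Ω : IndObject C) : Prop :=
  ∀ X : C, ∃ n : ℕ, Nonempty (X ⟶ Ω.obj n)

/-- An ind-object is f-injective if every embedding of an object of `C` into it extends
along any morphism of `C`. -/
def FInjective (Ω : IndObject C) : Prop :=
  ∀ ⦃X Y : C⦄ (α : X ⟶ Y) (n : ℕ) (γ : X ⟶ Ω.obj n),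
    ∃ (m : ℕ) (h : n ≤ m) (β : Y ⟶ Ω.obj m), α ≫ β = γ ≫ Ω.trans h

theorem trans_self (Ω : IndObject C) (n : ℕ) : Ω.trans (le_refl n) = 𝟙 _ :=
  Nat.leRecOn_self _

theorem trans_succ (Ω : IndObject C) {n m : ℕ} (h : n ≤ m) :
    Ω.trans (h.trans (Nat.le_succ m)) = Ω.trans h ≫ Ω.map m :=
  Nat.leRecOn_succ _ _

theorem trans_trans (Ω : IndObject C) {n m k : ℕ} (h1 : n ≤ m) (h2 : m ≤ k) :
    Ω.trans h1 ≫ Ω.trans h2 = Ω.trans (h1.trans h2) := by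
  induction h2 with
  | refl => simp [trans_self]
  | @step k' h2' ih =>
    rw [trans_succ Ω h2', trans_succ Ω (h1.trans h2'), ← Category.assoc, ih]

end IndObject


/-- A morphism of ind-objects `Ξ → Ω`. -/
structure IndHom {C : Type u} [Category.{v} C] (Ξ Ω : IndObject C) where
  a : ℕ → ℕ
  amono : Monotone a
  app : ∀ n : ℕ, Ξ.obj n ⟶ Ω.obj (a n)
  comm : ∀ {n m : ℕ} (h : n ≤ m), Ξ.trans h ≫ app m = app n ≫ Ω.trans (amono h)

/-- every ind-object embeds into a universal homogeneous (equivalently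
universal f-injective) ind-object, via a morphism of ind-objects with monic components. -/
theorem stmt_13 (C : Type u) [Category.{v} C]
    (hmono : ∀ {X Y : C} (f : X ⟶ Y), Mono f)
    (Ω : IndObject C) (huniv : Ω.Universal) (hfinj : Ω.FInjective)
    (Ξ : IndObject C) :
    ∃ φ : IndHom Ξ Ω, ∀ n : ℕ, Mono (φ.app n) := by

  classical
  -- base case
  obtain ⟨k0, ⟨β0⟩⟩ := huniv (Ξ.obj 0)
  -- step function
  let next : ∀ n, (Σ' k : ℕ, Ξ.obj n ⟶ Ω.obj k) → (Σ' k : ℕ, Ξ.obj (n+1) ⟶ Ω.obj k) :=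
    fun n p =>
      ⟨(hfinj (Ξ.map n) p.1 p.2).choose,
       (hfinj (Ξ.map n) p.1 p.2).choose_spec.choose_spec.choose⟩
  have hnext_le : ∀ n p, p.1 ≤ (next n p).1 :=
    fun n p => (hfinj (Ξ.map n) p.1 p.2).choose_spec.choose
  have hnext_comm : ∀ n p, Ξ.map n ≫ (next n p).2 = p.2 ≫ Ω.trans (hnext_le n p) :=
    fun n p => (hfinj (Ξ.map n) p.1 p.2).choose_spec.choose_spec.choose_spec
  let seq : ∀ n : ℕ, Σ' k : ℕ, Ξ.obj n ⟶ Ω.obj k :=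
    fun n => Nat.rec ⟨k0, β0⟩ next n
  have hseq_succ : ∀ n, seq (n+1) = next n (seq n) := fun n => rfl
  let a : ℕ → ℕ := fun n => (seq n).1
  have hstep : ∀ n, a n ≤ a (n+1) := fun n => hnext_le n (seq n)
  have hamono : Monotone a := monotone_nat_of_le_succ hstep
  have key : ∀ {n m : ℕ} (h : n ≤ m),
      Ξ.trans h ≫ (seq m).2 = (seq n).2 ≫ Ω.trans (hamono h) := by
    intro n m h
    induction h with
    | refl => simp [IndObject.trans_self]
    | @step m' h' ih =>
      have e1 : Ξ.trans (Nat.le_trans h' (Nat.le_succ m')) =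
          Ξ.trans h' ≫ Ξ.map m' := Ξ.trans_succ h'
      rw [e1, Category.assoc, hnext_comm m' (seq m'), ← Category.assoc, ih,
        Category.assoc, Ω.trans_trans]
  refine ⟨⟨a, hamono, fun n => (seq n).2, key⟩, fun n => hmono _⟩
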